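/- Let d ≥ 1, let φ : ℝ^d → ℝ be a C¹ function with compact support, let ψ : ℝ^d → ℝ be a C² function, let η : ℝ → [0,∞) be a C¹ function with η′ > 0 everywhere, and let 0 < γ < 1. Then ∫_{ℝ^d} φ(x)² [ η(ψ(x)) Δψ(x) + (1−γ) η′(ψ(x)) |∇ψ(x)|² ] dx ≤ (1/γ) ∫_{ℝ^d} ( η(ψ(x))² / η′(ψ(x)) ) |∇φ(x)|² dx, where Δ denotes the Euclidean Laplacian and ∇ the Euclidean gradient. -/

import Mathlib

open MeasureTheory

noncomputable def euclideanLaplacian {d : ℕ} (f : EuclideanSpace ℝ (Fin d) → ℝ)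
    (x : EuclideanSpace ℝ (Fin d)) : ℝ :=
  ∑ i : Fin d, iteratedFDeriv ℝ 2 f x (fun _ => EuclideanSpace.single i 1)

section aux
variable {d : ℕ}

lemma inner_gradient_eq' (f : EuclideanSpace ℝ (Fin d) → ℝ) (x v : EuclideanSpace ℝ (Fin d)) :
    (inner ℝ (gradient f x) v : ℝ) = fderiv ℝ f x v :=
  InnerProductSpace.toDual_symm_apply

lemma gradient_coord (f : EuclideanSpace ℝ (Fin d) → ℝ) (x : EuclideanSpace ℝ (Fin d))
    (i : Fin d) : gradient f x i = fderiv ℝ f x (EuclideanSpace.single i 1) := by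
  have h := inner_gradient_eq' f x (EuclideanSpace.single i 1)
  rw [EuclideanSpace.inner_single_right] at h
  simpa using h

lemma norm_sq_eq_sum_sq (v : EuclideanSpace ℝ (Fin d)) : ‖v‖ ^ 2 = ∑ i, v i ^ 2 := by
  rw [EuclideanSpace.norm_eq, Real.sq_sqrt (by positivity)]
  simp [sq_abs]

lemma grad_norm_sq (f : EuclideanSpace ℝ (Fin d) → ℝ) (x : EuclideanSpace ℝ (Fin d)) :
    ‖gradient f x‖ ^ 2 = ∑ i, (fderiv ℝ f x (EuclideanSpace.single i 1)) ^ 2 := by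
  rw [norm_sq_eq_sum_sq]
  exact Finset.sum_congr rfl fun i _ => by rw [gradient_coord]

lemma pointwise_bound {n : ℕ} (a b : Fin n → ℝ) (p h h' γ : ℝ)
    (hh' : 0 < h') (hγ0 : 0 < γ) :
    (1 - γ) * h' * (p ^ 2 * ∑ i, a i ^ 2)
      - ∑ i, ((p ^ 2 * (h' * a i) + h * (2 * p * b i)) * a i)
      ≤ (1 / γ) * (h ^ 2 / h' * ∑ i, b i ^ 2) := by
  have key : (0:ℝ) ≤ ∑ i, (γ * h' * p * a i + h * b i) ^ 2 :=
    Finset.sum_nonneg fun i _ => sq_nonneg _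
  have expand : ∑ i, (γ * h' * p * a i + h * b i) ^ 2
      = γ ^ 2 * h' ^ 2 * p ^ 2 * (∑ i, a i ^ 2)
        + 2 * γ * h' * p * h * (∑ i, a i * b i) + h ^ 2 * (∑ i, b i ^ 2) := by
    rw [Finset.mul_sum, Finset.mul_sum, Finset.mul_sum, ← Finset.sum_add_distrib,
      ← Finset.sum_add_distrib]
    exact Finset.sum_congr rfl fun i _ => by ring
  rw [expand] at key
  have hM2 : ∑ i, ((p ^ 2 * (h' * a i) + h * (2 * p * b i)) * a i)
      = p ^ 2 * h' * (∑ i, a i ^ 2) + 2 * p * h * (∑ i, a i * b i) := by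
    rw [Finset.mul_sum, Finset.mul_sum, ← Finset.sum_add_distrib]
    exact Finset.sum_congr rfl fun i _ => by ring
  rw [hM2]
  have hγne : γ ≠ 0 := hγ0.ne'
  have hh'ne : h' ≠ 0 := hh'.ne'
  rw [show (1 / γ) * (h ^ 2 / h' * ∑ i, b i ^ 2) = (h ^ 2 * ∑ i, b i ^ 2) / (γ * h') by
    field_simp, le_div_iff₀ (mul_pos hγ0 hh')]
  nlinarith [key]

end aux

theorem stmt_0 {d : ℕ} (hd : 1 ≤ d)
    (φ ψ : EuclideanSpace ℝ (Fin d) → ℝ)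
    (hφ : ContDiff ℝ 1 φ) (hφc : HasCompactSupport φ)
    (hψ : ContDiff ℝ 2 ψ)
    (η : ℝ → ℝ) (hη : ContDiff ℝ 1 η) (hη0 : ∀ t, 0 ≤ η t)
    (hη' : ∀ t, 0 < deriv η t)
    (γ : ℝ) (hγ0 : 0 < γ) (hγ1 : γ < 1) :
    ∫ x, φ x ^ 2 * (η (ψ x) * euclideanLaplacian ψ x
        + (1 - γ) * deriv η (ψ x) * ‖gradient ψ x‖ ^ 2)
      ≤ (1 / γ) * ∫ x, (η (ψ x)) ^ 2 / deriv η (ψ x) * ‖gradient φ x‖ ^ 2 := by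
  set ee : Fin d → EuclideanSpace ℝ (Fin d) := fun i => EuclideanSpace.single i 1 with hee
  set G : EuclideanSpace ℝ (Fin d) → ℝ := fun x => φ x ^ 2 * η (ψ x) with hG
  -- differentiability
  have hψd : Differentiable ℝ ψ := hψ.differentiable (by norm_num)
  have hφd : Differentiable ℝ φ := hφ.differentiable one_ne_zero
  have hηd : Differentiable ℝ η := hη.differentiable one_ne_zero
  have hψ' : ContDiff ℝ 1 (fderiv ℝ ψ) := hψ.fderiv_right (by norm_num)
  have hg : ∀ i : Fin d, ContDiff ℝ 1 (fun x => fderiv ℝ ψ x (ee i)) := fun i =>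
    (ContinuousLinearMap.apply ℝ ℝ (ee i)).contDiff.comp hψ'
  have hGc1 : ContDiff ℝ 1 G := (hφ.pow 2).mul (hη.comp (hψ.of_le one_le_two))
  have hGd : Differentiable ℝ G := hGc1.differentiable one_ne_zero
  -- second derivative identity
  have hg' : ∀ (i : Fin d) (x), fderiv ℝ (fun y => fderiv ℝ ψ y (ee i)) x (ee i)
      = iteratedFDeriv ℝ 2 ψ x (fun _ => ee i) := by
    intro i x
    rw [iteratedFDeriv_two_apply]
    have hD : DifferentiableAt ℝ (fderiv ℝ ψ) x := (hψ'.differentiable one_ne_zero) x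
    have h1 : HasFDerivAt (fun y => fderiv ℝ ψ y (ee i))
        ((ContinuousLinearMap.apply ℝ ℝ (ee i)).comp (fderiv ℝ (fderiv ℝ ψ) x)) x :=
      (ContinuousLinearMap.apply ℝ ℝ (ee i)).hasFDerivAt.comp x hD.hasFDerivAt
    rw [h1.fderiv]; rfl
  -- fderiv of G
  have hG' : ∀ (x) (i : Fin d), fderiv ℝ G x (ee i)
      = φ x ^ 2 * (deriv η (ψ x) * fderiv ℝ ψ x (ee i))
        + η (ψ x) * (2 * φ x * fderiv ℝ φ x (ee i)) := by
    intro x i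
    have h1 : HasFDerivAt (fun y => φ y ^ 2) ((2 * φ x) • fderiv ℝ φ x) x := by
      simpa [pow_two, two_mul, add_smul] using (hφd x).hasFDerivAt.fun_mul (hφd x).hasFDerivAt
    have h2 : HasFDerivAt (fun y => η (ψ y)) (deriv η (ψ x) • fderiv ℝ ψ x) x :=
      (hηd (ψ x)).hasDerivAt.comp_hasFDerivAt x (hψd x).hasFDerivAt
    have h3 := h1.fun_mul h2
    rw [hG, h3.fderiv]
    simp
  -- vanishing off tsupport φ
  have hφ0 : ∀ x ∉ tsupport φ, φ x = 0 := fun x hx => image_eq_zero_of_notMem_tsupport hx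
  have hb0 : ∀ x ∉ tsupport φ, fderiv ℝ φ x = 0 := by
    intro x hx
    by_contra h
    exact hx (support_fderiv_subset ℝ (Function.mem_support.mpr h))
  have hG0 : ∀ x ∉ tsupport φ, G x = 0 := fun x hx => by simp [hG, hφ0 x hx]
  have hGt : tsupport G ⊆ tsupport φ := by
    apply closure_minimal _ (isClosed_tsupport φ)
    intro x hx
    by_contra h
    exact Function.mem_support.mp hx (hG0 x h)
  have hG'0 : ∀ x ∉ tsupport φ, fderiv ℝ G x = 0 := by
    intro x hx
    by_contra h
    exact hx (hGt (support_fderiv_subset ℝ (Function.mem_support.mpr h)))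
  -- integrability helper
  have hint : ∀ u : EuclideanSpace ℝ (Fin d) → ℝ, Continuous u →
      (∀ x ∉ tsupport φ, u x = 0) → Integrable u volume := fun u hc hu =>
    hc.integrable_of_hasCompactSupport (HasCompactSupport.intro hφc hu)
  -- continuity facts
  have hca : ∀ i : Fin d, Continuous (fun x => fderiv ℝ ψ x (ee i)) := fun i =>
    (hg i).continuous
  have hcb : ∀ i : Fin d, Continuous (fun x => fderiv ℝ φ x (ee i)) := fun i =>
    (ContinuousLinearMap.apply ℝ ℝ (ee i)).continuous.comp (hφ.continuous_fderiv one_ne_zero)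
  have hcG : Continuous G := hGc1.continuous
  have hcG' : ∀ i : Fin d, Continuous (fun x => fderiv ℝ G x (ee i)) := fun i =>
    (ContinuousLinearMap.apply ℝ ℝ (ee i)).continuous.comp (hGc1.continuous_fderiv one_ne_zero)
  have hcg' : ∀ i : Fin d,
      Continuous (fun x => fderiv ℝ (fun y => fderiv ℝ ψ y (ee i)) x (ee i)) := by
    intro i
    have h1 : Continuous (fderiv ℝ (fderiv ℝ ψ)) := hψ'.continuous_fderiv one_ne_zero
    have h2 : (fun x => fderiv ℝ (fun y => fderiv ℝ ψ y (ee i)) x (ee i))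
        = fun x => (fderiv ℝ (fderiv ℝ ψ) x (ee i)) (ee i) := by
      funext x
      rw [hg' i x, iteratedFDeriv_two_apply]
    rw [h2]
    exact (ContinuousLinearMap.apply ℝ ℝ (ee i)).continuous.comp
      ((ContinuousLinearMap.apply ℝ (EuclideanSpace ℝ (Fin d) →L[ℝ] ℝ) (ee i)).continuous.comp h1)
  have hcη' : Continuous (fun x => deriv η (ψ x)) :=
    (hη.continuous_deriv le_rfl).comp hψ.continuous
  -- integrable pieces
  have int1 : ∀ i : Fin d,
      Integrable (fun x => G x * fderiv ℝ (fun y => fderiv ℝ ψ y (ee i)) x (ee i)) volume :=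
    fun i => hint _ (hcG.mul (hcg' i)) (fun x hx => by rw [hG0 x hx, zero_mul])
  have int2 : ∀ i : Fin d,
      Integrable (fun x => fderiv ℝ G x (ee i) * fderiv ℝ ψ x (ee i)) volume :=
    fun i => hint _ ((hcG' i).mul (hca i)) (fun x hx => by rw [hG'0 x hx]; simp)
  have int3 : ∀ i : Fin d, Integrable (fun x => G x * fderiv ℝ ψ x (ee i)) volume :=
    fun i => hint _ (hcG.mul (hca i)) (fun x hx => by rw [hG0 x hx, zero_mul])
  -- integration by parts
  have hIBP : ∀ i : Fin d,
      ∫ x, G x * fderiv ℝ (fun y => fderiv ℝ ψ y (ee i)) x (ee i)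
        = -∫ x, fderiv ℝ G x (ee i) * fderiv ℝ ψ x (ee i) := fun i =>
    integral_mul_fderiv_eq_neg_fderiv_mul_of_integrable (int2 i) (int1 i) (int3 i)
      (fun x _ => hGd x) (fun x _ => (hg i).differentiable one_ne_zero x)
  -- coordinate identities
  have hnψ : ∀ x, ‖gradient ψ x‖ ^ 2 = ∑ i, (fderiv ℝ ψ x (ee i)) ^ 2 := fun x =>
    grad_norm_sq ψ x
  have hnφ : ∀ x, ‖gradient φ x‖ ^ 2 = ∑ i, (fderiv ℝ φ x (ee i)) ^ 2 := fun x =>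
    grad_norm_sq φ x
  have hLap : ∀ x, euclideanLaplacian ψ x
      = ∑ i, fderiv ℝ (fun y => fderiv ℝ ψ y (ee i)) x (ee i) := fun x =>
    Finset.sum_congr rfl fun i _ => (hg' i x).symm
  -- the integrand pieces
  set L1 : EuclideanSpace ℝ (Fin d) → ℝ :=
    fun x => ∑ i, G x * fderiv ℝ (fun y => fderiv ℝ ψ y (ee i)) x (ee i) with hL1
  set L2 : EuclideanSpace ℝ (Fin d) → ℝ :=
    fun x => (1 - γ) * deriv η (ψ x) * (φ x ^ 2 * ∑ i, (fderiv ℝ ψ x (ee i)) ^ 2) with hL2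
  set M : EuclideanSpace ℝ (Fin d) → ℝ :=
    fun x => ∑ i, fderiv ℝ G x (ee i) * fderiv ℝ ψ x (ee i) with hM
  have intL1 : Integrable L1 volume := by
    rw [hL1]; exact integrable_finset_sum _ (fun i _ => int1 i)
  have intL2 : Integrable L2 volume := by
    refine hint _ ?_ ?_
    · exact (continuous_const.mul hcη').mul ((hφ.continuous.pow 2).mul
        (continuous_finset_sum _ fun i _ => (hca i).pow 2))
    · intro x hx; simp [hL2, hφ0 x hx]
  have intM : Integrable M volume := by
    rw [hM]; exact integrable_finset_sum _ (fun i _ => int2 i)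
  -- identify the LHS
  have step1 : ∫ x, φ x ^ 2 * (η (ψ x) * euclideanLaplacian ψ x
        + (1 - γ) * deriv η (ψ x) * ‖gradient ψ x‖ ^ 2)
      = (∫ x, L1 x) + ∫ x, L2 x := by
    rw [← integral_add intL1 intL2]
    congr 1
    funext x
    rw [hLap x, hnψ x]
    simp only [hL1, hL2, hG, Pi.add_apply]
    rw [← Finset.mul_sum]
    ring
  have step2 : ∫ x, L1 x = -∫ x, M x := by
    simp only [hL1, hM]
    rw [integral_finset_sum _ (fun i _ => int1 i),
      integral_finset_sum _ (fun i _ => int2 i), ← Finset.sum_neg_distrib]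
    exact Finset.sum_congr rfl fun i _ => hIBP i
  -- pointwise bound
  have pointwise : ∀ x, L2 x - M x
      ≤ (1 / γ) * ((η (ψ x)) ^ 2 / deriv η (ψ x) * ∑ i, (fderiv ℝ φ x (ee i)) ^ 2) := by
    intro x
    simp only [hL2, hM, hG']
    exact pointwise_bound (fun i => fderiv ℝ ψ x (ee i)) (fun i => fderiv ℝ φ x (ee i))
      (φ x) (η (ψ x)) (deriv η (ψ x)) γ (hη' _) hγ0
  -- integrability of the RHS bound
  have intR : Integrable (fun x =>
      (1 / γ) * ((η (ψ x)) ^ 2 / deriv η (ψ x) * ∑ i, (fderiv ℝ φ x (ee i)) ^ 2)) volume := by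
    refine hint _ ?_ ?_
    · exact continuous_const.mul ((((hη.continuous.comp hψ.continuous).pow 2).div hcη'
        (fun x => (hη' _).ne')).mul (continuous_finset_sum _ fun i _ => (hcb i).pow 2))
    · intro x hx
      have hz : ∀ i : Fin d, fderiv ℝ φ x (ee i) = 0 := fun i => by simp [hb0 x hx]
      simp [hz]
  -- put it together
  rw [step1, step2, neg_add_eq_sub, ← integral_sub intL2 intM]
  have final : ∫ x, (L2 x - M x)
      ≤ ∫ x, (1 / γ) * ((η (ψ x)) ^ 2 / deriv η (ψ x) * ∑ i, (fderiv ℝ φ x (ee i)) ^ 2) :=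
    integral_mono (intL2.sub intM) intR pointwise
  refine final.trans ?_
  rw [integral_const_mul]
  have heq : (∫ x, (η (ψ x)) ^ 2 / deriv η (ψ x) * ∑ i, (fderiv ℝ φ x (ee i)) ^ 2)
      = ∫ x, (η (ψ x)) ^ 2 / deriv η (ψ x) * ‖gradient φ x‖ ^ 2 := by
    congr 1
    funext x
    rw [hnφ x]
  rw [heq]
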